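/- Let k ≥ 1 and let a, b, c be integers with 0 ≤ a ≤ k, 0 ≤ b ≤ k, 0 ≤ c ≤ k−1. The rational function v(ξ,η,ζ) = ξ^a η^b ζ^c (1−ζ)^{k−a−b−c} (equivalently, ξ^a η^b ζ^c/(1−ζ)^{a+b+c−k}) is differentiable at every point of Ω°, the function v² is Lebesgue-integrable over Ω°, and the squared Euclidean norm of the gradient of v is Lebesgue-integrable over Ω°; i.e. v ∈ H¹(Ω). (This is the statement that x^a y^b z^c/(1+z)^k belongs to the weighted space H¹_w(Ω∞).) -/

import Mathlib

open MeasureTheory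
set_option maxHeartbeats 1000000
set_option synthInstance.maxHeartbeats 400000

noncomputable section

/-- The reference pyramid `Ω` inside Euclidean `ℝ³`. -/
def Pyr : Set (EuclideanSpace ℝ (Fin 3)) :=
  {p | 0 ≤ p 0 ∧ 0 ≤ p 1 ∧ 0 ≤ p 2 ∧ p 0 ≤ 1 - p 2 ∧ p 1 ≤ 1 - p 2}

/-- The rational function `v(ξ,η,ζ) = ξ^a η^b ζ^c (1−ζ)^{k−a−b−c}` (integer power). -/
def vFun (k a b c : ℕ) : EuclideanSpace ℝ (Fin 3) → ℝ :=
  fun p => p 0 ^ a * p 1 ^ b * p 2 ^ c * (1 - p 2) ^ ((k : ℤ) - a - b - c)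

abbrev E3 := EuclideanSpace ℝ (Fin 3)

lemma abs_apply_le_norm (p : E3) (i : Fin 3) : |p i| ≤ ‖p‖ := by
  rw [EuclideanSpace.norm_eq]
  have h1 : |p i| = Real.sqrt (‖p i‖ ^ 2) := by
    rw [Real.sqrt_sq_eq_abs, abs_norm, Real.norm_eq_abs]
  rw [h1]
  apply Real.sqrt_le_sqrt
  exact Finset.single_le_sum (f := fun j => ‖p j‖ ^ 2) (fun j _ => by positivity)
    (Finset.mem_univ i)

lemma norm_proj_le (i : Fin 3) : ‖(EuclideanSpace.proj i : E3 →L[ℝ] ℝ)‖ ≤ 1 := by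
  apply ContinuousLinearMap.opNorm_le_bound _ zero_le_one
  intro p
  rw [one_mul]
  simpa [Real.norm_eq_abs] using abs_apply_le_norm p i

lemma interior_facts {x : E3} (hx : x ∈ interior Pyr) :
    0 ≤ x 0 ∧ 0 ≤ x 1 ∧ 0 ≤ x 2 ∧ x 0 ≤ 1 - x 2 ∧ x 1 ≤ 1 - x 2 ∧ 0 < 1 - x 2 := by
  have hxP : x ∈ Pyr := interior_subset hx
  obtain ⟨h0, h1, h2, h3, h4⟩ := hxP
  refine ⟨h0, h1, h2, h3, h4, ?_⟩
  rw [mem_interior_iff_mem_nhds, Metric.mem_nhds_iff] at hx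
  obtain ⟨ε, hε, hball⟩ := hx
  have hy : x + EuclideanSpace.single 0 (ε / 2) ∈ Pyr := by
    apply hball
    rw [Metric.mem_ball, dist_eq_norm, add_sub_cancel_left, EuclideanSpace.norm_single,
      Real.norm_eq_abs, abs_of_pos (half_pos hε)]
    linarith
  obtain ⟨g0, g1, g2, g3, g4⟩ := hy
  have e0 : (x + EuclideanSpace.single 0 (ε / 2) : E3) 0 = x 0 + ε / 2 := by
    simp [EuclideanSpace.single_apply]
  have e2 : (x + EuclideanSpace.single 0 (ε / 2) : E3) 2 = x 2 := by
    simp [EuclideanSpace.single_apply]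
  rw [e0, e2] at g3
  linarith

lemma key_le_one {s x0 x1 x2 : ℝ} (hs : 0 < s) (hs1 : s ≤ 1) (h0 : 0 ≤ x0) (h0s : x0 ≤ s)
    (h1 : 0 ≤ x1) (h1s : x1 ≤ s) (h2 : 0 ≤ x2) (h2s : x2 ≤ 1) (p q r : ℕ) (m : ℤ)
    (hm : 0 ≤ (p : ℤ) + q + m) : x0 ^ p * x1 ^ q * x2 ^ r * s ^ m ≤ 1 := by
  have hsm : (0:ℝ) < s ^ m := zpow_pos hs m
  have step : x0 ^ p * x1 ^ q * x2 ^ r * s ^ m ≤ s ^ p * s ^ q * 1 * s ^ m := by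
    gcongr
    exact pow_le_one₀ h2 h2s
  refine step.trans ?_
  have : s ^ p * s ^ q * 1 * s ^ m = s ^ ((p : ℤ) + q + m) := by
    rw [mul_one, ← zpow_natCast s p, ← zpow_natCast s q, ← zpow_add₀ hs.ne', ← zpow_add₀ hs.ne']
  rw [this, ← Int.toNat_of_nonneg hm, zpow_natCast]
  exact pow_le_one₀ hs.le hs1

lemma hasFDerivAt_aux (a b c : ℕ) (m : ℤ) {x : E3} (hx2 : (1:ℝ) - x 2 ≠ 0) :
    HasFDerivAt (fun p : E3 => p 0 ^ a * p 1 ^ b * p 2 ^ c * (1 - p 2) ^ m)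
      ((x 0 ^ a * x 1 ^ b * x 2 ^ c) •
          (((m : ℝ) * (1 - x 2) ^ (m - 1) * -1) • (EuclideanSpace.proj 2 : E3 →L[ℝ] ℝ))
        + ((1 - x 2) ^ m) •
          ((x 0 ^ a * x 1 ^ b) •
              (((c : ℝ) * x 2 ^ (c - 1)) • (EuclideanSpace.proj 2 : E3 →L[ℝ] ℝ))
            + (x 2 ^ c) •
              ((x 0 ^ a) •
                  (((b : ℝ) * x 1 ^ (b - 1)) • (EuclideanSpace.proj 1 : E3 →L[ℝ] ℝ))
                + (x 1 ^ b) •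
                  (((a : ℝ) * x 0 ^ (a - 1)) • (EuclideanSpace.proj 0 : E3 →L[ℝ] ℝ))))) x := by
  have hL0 : HasFDerivAt (fun p : E3 => p 0) (EuclideanSpace.proj 0 : E3 →L[ℝ] ℝ) x :=
    (EuclideanSpace.proj (0 : Fin 3) : E3 →L[ℝ] ℝ).hasFDerivAt
  have hL1 : HasFDerivAt (fun p : E3 => p 1) (EuclideanSpace.proj 1 : E3 →L[ℝ] ℝ) x :=
    (EuclideanSpace.proj (1 : Fin 3) : E3 →L[ℝ] ℝ).hasFDerivAt
  have hL2 : HasFDerivAt (fun p : E3 => p 2) (EuclideanSpace.proj 2 : E3 →L[ℝ] ℝ) x :=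
    (EuclideanSpace.proj (2 : Fin 3) : E3 →L[ℝ] ℝ).hasFDerivAt
  have h0 : HasFDerivAt (fun p : E3 => p 0 ^ a)
      (((a : ℝ) * x 0 ^ (a - 1)) • (EuclideanSpace.proj 0 : E3 →L[ℝ] ℝ)) x :=
    (hasDerivAt_pow a (x 0)).comp_hasFDerivAt x hL0
  have h1 : HasFDerivAt (fun p : E3 => p 1 ^ b)
      (((b : ℝ) * x 1 ^ (b - 1)) • (EuclideanSpace.proj 1 : E3 →L[ℝ] ℝ)) x :=
    (hasDerivAt_pow b (x 1)).comp_hasFDerivAt x hL1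
  have h2 : HasFDerivAt (fun p : E3 => p 2 ^ c)
      (((c : ℝ) * x 2 ^ (c - 1)) • (EuclideanSpace.proj 2 : E3 →L[ℝ] ℝ)) x :=
    (hasDerivAt_pow c (x 2)).comp_hasFDerivAt x hL2
  have hsub : HasDerivAt (fun t : ℝ => 1 - t) (-1) (x 2) := by
    simpa using (hasDerivAt_id (x 2)).const_sub 1
  have hz : HasDerivAt (fun t : ℝ => (1 - t) ^ m)
      ((m : ℝ) * (1 - x 2) ^ (m - 1) * -1) (x 2) :=
    (hasDerivAt_zpow m (1 - x 2) (Or.inl hx2)).comp (x 2) hsub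
  have h3 : HasFDerivAt (fun p : E3 => (1 - p 2) ^ m)
      (((m : ℝ) * (1 - x 2) ^ (m - 1) * -1) • (EuclideanSpace.proj 2 : E3 →L[ℝ] ℝ)) x :=
    by have := hz.comp_hasFDerivAt x hL2; exact this
  exact ((h0.mul h1).mul h2).mul h3

lemma norm_smul_clm (r : ℝ) (L : E3 →L[ℝ] ℝ) : ‖r • L‖ = ‖r‖ * ‖L‖ := norm_smul r L

lemma smul_smul_norm_le (r t : ℝ) (i : Fin 3) (hr : 0 ≤ r) :
    ‖r • (t • (EuclideanSpace.proj i : E3 →L[ℝ] ℝ))‖ ≤ r * |t| := by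
  rw [norm_smul_clm, norm_smul_clm, Real.norm_eq_abs, Real.norm_eq_abs, abs_of_nonneg hr]
  refine mul_le_mul_of_nonneg_left ?_ hr
  calc |t| * ‖(EuclideanSpace.proj i : E3 →L[ℝ] ℝ)‖ ≤ |t| * 1 :=
        mul_le_mul_of_nonneg_left (norm_proj_le i) (abs_nonneg t)
    _ = |t| := mul_one _

lemma fderiv_bound (k a b c : ℕ) (hk : 1 ≤ k) (ha : a ≤ k) (hb : b ≤ k) (hc : c ≤ k - 1)
    {x : E3} (hx : x ∈ interior Pyr) :
    ‖fderiv ℝ (vFun k a b c) x‖ ≤ 5 * k := by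
  obtain ⟨h0, h1, h2, h3, h4, h5⟩ := interior_facts hx
  have hs1 : 1 - x 2 ≤ 1 := by linarith
  have h2le : x 2 ≤ 1 := by linarith
  set m : ℤ := (k:ℤ) - a - b - c with hmdef
  have hveq : vFun k a b c = fun p : E3 => p 0 ^ a * p 1 ^ b * p 2 ^ c * (1 - p 2) ^ m := rfl
  have hD := hasFDerivAt_aux a b c m (ne_of_gt h5)
  rw [hveq, hD.fderiv]
  have hsm : (0:ℝ) < (1 - x 2) ^ m := zpow_pos h5 m
  have hsm1 : (0:ℝ) < (1 - x 2) ^ (m - 1) := zpow_pos h5 _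
  have hP3 : (0:ℝ) ≤ x 0 ^ a * x 1 ^ b * x 2 ^ c := by positivity
  have habs_m : |(m : ℝ)| ≤ 2 * k := by
    have hub : m ≤ 2 * k := by omega
    have hlb : -(2 * (k:ℤ)) ≤ m := by omega
    rw [abs_le]
    exact ⟨by exact_mod_cast hlb, by exact_mod_cast hub⟩
  have key3 : x 0 ^ a * x 1 ^ b * x 2 ^ c * (1 - x 2) ^ (m - 1) ≤ 1 := by
    refine key_le_one h5 hs1 h0 h3 h1 h4 h2 h2le a b c (m - 1) ?_
    omega
  have hT2 : (c : ℝ) * (x 0 ^ a * x 1 ^ b * x 2 ^ (c - 1) * (1 - x 2) ^ m) ≤ k := by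
    rcases Nat.eq_zero_or_pos c with hc0 | hc0
    · simp [hc0]
    · have hkey : x 0 ^ a * x 1 ^ b * x 2 ^ (c - 1) * (1 - x 2) ^ m ≤ 1 :=
        key_le_one h5 hs1 h0 h3 h1 h4 h2 h2le a b (c - 1) m (by omega)
      calc (c : ℝ) * (x 0 ^ a * x 1 ^ b * x 2 ^ (c - 1) * (1 - x 2) ^ m)
          ≤ (c : ℝ) * 1 := mul_le_mul_of_nonneg_left hkey (by positivity)
        _ ≤ k := by rw [mul_one]; exact_mod_cast le_trans hc (Nat.sub_le k 1)
  have hT1 : (b : ℝ) * (x 0 ^ a * x 1 ^ (b - 1) * x 2 ^ c * (1 - x 2) ^ m) ≤ k := by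
    rcases Nat.eq_zero_or_pos b with hb0 | hb0
    · simp [hb0]
    · have hkey : x 0 ^ a * x 1 ^ (b - 1) * x 2 ^ c * (1 - x 2) ^ m ≤ 1 :=
        key_le_one h5 hs1 h0 h3 h1 h4 h2 h2le a (b - 1) c m (by omega)
      calc (b : ℝ) * (x 0 ^ a * x 1 ^ (b - 1) * x 2 ^ c * (1 - x 2) ^ m)
          ≤ (b : ℝ) * 1 := mul_le_mul_of_nonneg_left hkey (by positivity)
        _ ≤ k := by rw [mul_one]; exact_mod_cast hb
  have hT0 : (a : ℝ) * (x 0 ^ (a - 1) * x 1 ^ b * x 2 ^ c * (1 - x 2) ^ m) ≤ k := by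
    rcases Nat.eq_zero_or_pos a with ha0 | ha0
    · simp [ha0]
    · have hkey : x 0 ^ (a - 1) * x 1 ^ b * x 2 ^ c * (1 - x 2) ^ m ≤ 1 :=
        key_le_one h5 hs1 h0 h3 h1 h4 h2 h2le (a - 1) b c m (by omega)
      calc (a : ℝ) * (x 0 ^ (a - 1) * x 1 ^ b * x 2 ^ c * (1 - x 2) ^ m)
          ≤ (a : ℝ) * 1 := mul_le_mul_of_nonneg_left hkey (by positivity)
        _ ≤ k := by rw [mul_one]; exact_mod_cast ha
  have e1 : ‖(x 0 ^ a * x 1 ^ b * x 2 ^ c) •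
      (((m : ℝ) * (1 - x 2) ^ (m - 1) * -1) • (EuclideanSpace.proj 2 : E3 →L[ℝ] ℝ))‖
      ≤ 2 * k :=
    calc ‖(x 0 ^ a * x 1 ^ b * x 2 ^ c) •
        (((m : ℝ) * (1 - x 2) ^ (m - 1) * -1) • (EuclideanSpace.proj 2 : E3 →L[ℝ] ℝ))‖
        ≤ (x 0 ^ a * x 1 ^ b * x 2 ^ c) * |(m : ℝ) * (1 - x 2) ^ (m - 1) * -1| :=
          smul_smul_norm_le _ _ 2 hP3
      _ = |(m:ℝ)| * (x 0 ^ a * x 1 ^ b * x 2 ^ c * (1 - x 2) ^ (m - 1)) := by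
          rw [abs_mul, abs_mul, abs_neg, abs_one, mul_one, abs_of_pos hsm1]; ring
      _ ≤ 2 * k * 1 := mul_le_mul habs_m key3 (by positivity) (by positivity)
      _ = 2 * k := by ring
  have inner : ‖(x 0 ^ a * x 1 ^ b) •
        (((c : ℝ) * x 2 ^ (c - 1)) • (EuclideanSpace.proj 2 : E3 →L[ℝ] ℝ))
      + (x 2 ^ c) •
        ((x 0 ^ a) • (((b : ℝ) * x 1 ^ (b - 1)) • (EuclideanSpace.proj 1 : E3 →L[ℝ] ℝ))
          + (x 1 ^ b) • (((a : ℝ) * x 0 ^ (a - 1)) • (EuclideanSpace.proj 0 : E3 →L[ℝ] ℝ)))‖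
      ≤ x 0 ^ a * x 1 ^ b * ((c:ℝ) * x 2 ^ (c - 1))
        + x 2 ^ c * (x 0 ^ a * ((b:ℝ) * x 1 ^ (b - 1)) + x 1 ^ b * ((a:ℝ) * x 0 ^ (a - 1))) := by
    refine (norm_add_le _ _).trans (add_le_add ?_ ?_)
    · have h := smul_smul_norm_le (x 0 ^ a * x 1 ^ b) ((c:ℝ) * x 2 ^ (c - 1)) 2 (by positivity)
      rwa [abs_of_nonneg (by positivity : (0:ℝ) ≤ (c:ℝ) * x 2 ^ (c - 1))] at h
    · rw [norm_smul_clm, Real.norm_eq_abs, abs_of_nonneg (by positivity : (0:ℝ) ≤ x 2 ^ c)]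
      refine mul_le_mul_of_nonneg_left ?_ (by positivity)
      refine (norm_add_le _ _).trans (add_le_add ?_ ?_)
      · have h := smul_smul_norm_le (x 0 ^ a) ((b:ℝ) * x 1 ^ (b - 1)) 1 (by positivity)
        rwa [abs_of_nonneg (by positivity : (0:ℝ) ≤ (b:ℝ) * x 1 ^ (b - 1))] at h
      · have h := smul_smul_norm_le (x 1 ^ b) ((a:ℝ) * x 0 ^ (a - 1)) 0 (by positivity)
        rwa [abs_of_nonneg (by positivity : (0:ℝ) ≤ (a:ℝ) * x 0 ^ (a - 1))] at h
  have e2 : ‖((1 - x 2) ^ m) •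
      ((x 0 ^ a * x 1 ^ b) •
          (((c : ℝ) * x 2 ^ (c - 1)) • (EuclideanSpace.proj 2 : E3 →L[ℝ] ℝ))
        + (x 2 ^ c) •
          ((x 0 ^ a) • (((b : ℝ) * x 1 ^ (b - 1)) • (EuclideanSpace.proj 1 : E3 →L[ℝ] ℝ))
            + (x 1 ^ b) • (((a : ℝ) * x 0 ^ (a - 1)) • (EuclideanSpace.proj 0 : E3 →L[ℝ] ℝ))))‖
      ≤ 3 * k := by
    rw [norm_smul_clm, Real.norm_eq_abs, abs_of_pos hsm]
    calc (1 - x 2) ^ m * ‖_ + _‖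
        ≤ (1 - x 2) ^ m *
          (x 0 ^ a * x 1 ^ b * ((c:ℝ) * x 2 ^ (c - 1))
            + x 2 ^ c * (x 0 ^ a * ((b:ℝ) * x 1 ^ (b - 1)) + x 1 ^ b * ((a:ℝ) * x 0 ^ (a - 1)))) :=
          mul_le_mul_of_nonneg_left inner hsm.le
      _ = (c : ℝ) * (x 0 ^ a * x 1 ^ b * x 2 ^ (c - 1) * (1 - x 2) ^ m)
          + (b : ℝ) * (x 0 ^ a * x 1 ^ (b - 1) * x 2 ^ c * (1 - x 2) ^ m)
          + (a : ℝ) * (x 0 ^ (a - 1) * x 1 ^ b * x 2 ^ c * (1 - x 2) ^ m) := by ring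
      _ ≤ (k : ℝ) + (k : ℝ) + (k : ℝ) := add_le_add (add_le_add hT2 hT1) hT0
      _ = 3 * k := by ring
  calc ‖_ + _‖ ≤ 2 * (k:ℝ) + 3 * (k:ℝ) := (norm_add_le _ _).trans (add_le_add e1 e2)
    _ = 5 * k := by ring

lemma vFun_abs_le_one (k a b c : ℕ) (hc : c ≤ k) {x : E3} (hx : x ∈ interior Pyr) :
    |vFun k a b c x| ≤ 1 := by
  obtain ⟨h0, h1, h2, h3, h4, h5⟩ := interior_facts hx
  have hs1 : 1 - x 2 ≤ 1 := by linarith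
  have h2le : x 2 ≤ 1 := by linarith
  have hnn : 0 ≤ vFun k a b c x := by
    have : (0:ℝ) < (1 - x 2) ^ ((k:ℤ) - a - b - c) := zpow_pos h5 _
    unfold vFun
    positivity
  rw [abs_of_nonneg hnn]
  exact key_le_one h5 hs1 h0 h3 h1 h4 h2 h2le a b c ((k:ℤ) - a - b - c) (by omega)

lemma pyr_volume_lt_top : volume (interior Pyr) < ⊤ := by
  refine lt_of_le_of_lt (measure_mono interior_subset) ?_
  have hb : Bornology.IsBounded Pyr := by
    refine (Metric.isBounded_closedBall (x := (0 : E3)) (r := 2)).subset ?_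
    rintro p ⟨h0, h1, h2, h3, h4⟩
    have hp2 : p 2 ≤ 1 := by linarith
    have hp0 : p 0 ≤ 1 := by linarith
    have hp1 : p 1 ≤ 1 := by linarith
    rw [Metric.mem_closedBall, dist_zero_right, EuclideanSpace.norm_eq]
    have hsum : ∑ i, ‖p i‖ ^ 2 ≤ 4 := by
      rw [Fin.sum_univ_three]
      have e0 : ‖p 0‖ ^ 2 ≤ 1 := by rw [Real.norm_eq_abs, sq_abs]; nlinarith
      have e1 : ‖p 1‖ ^ 2 ≤ 1 := by rw [Real.norm_eq_abs, sq_abs]; nlinarith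
      have e2 : ‖p 2‖ ^ 2 ≤ 1 := by rw [Real.norm_eq_abs, sq_abs]; nlinarith
      linarith
    calc Real.sqrt (∑ i, ‖p i‖ ^ 2) ≤ Real.sqrt 4 := Real.sqrt_le_sqrt hsum
      _ = 2 := by
          rw [show (4:ℝ) = 2 ^ 2 by norm_num, Real.sqrt_sq (by norm_num : (0:ℝ) ≤ 2)]
  exact hb.measure_lt_top

/-- for `k ≥ 1`, `0 ≤ a ≤ k`, `0 ≤ b ≤ k`, `0 ≤ c ≤ k−1`, the function
`v = ξ^a η^b ζ^c (1−ζ)^{k−a−b−c}` is differentiable on `Ω°`, `v²` is integrable on `Ω°`,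
and the squared Euclidean norm of its gradient is integrable on `Ω°`; i.e. `v ∈ H¹(Ω)`. -/
theorem vFun_mem_H1 (k a b c : ℕ) (hk : 1 ≤ k) (ha : a ≤ k) (hb : b ≤ k)
    (hc : c ≤ k - 1) :
    (∀ x ∈ interior Pyr, DifferentiableAt ℝ (vFun k a b c) x) ∧
    IntegrableOn (fun x => (vFun k a b c x) ^ 2) (interior Pyr) volume ∧
    IntegrableOn (fun x => ‖fderiv ℝ (vFun k a b c) x‖ ^ 2) (interior Pyr) volume := by
  have hdiff : ∀ x ∈ interior Pyr, DifferentiableAt ℝ (vFun k a b c) x := by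
    intro x hx
    have h5 := (interior_facts hx).2.2.2.2.2
    exact (hasFDerivAt_aux a b c ((k:ℤ) - a - b - c) (ne_of_gt h5)).differentiableAt
  refine ⟨hdiff, ?_, ?_⟩
  · have hcont : ContinuousOn (fun x => (vFun k a b c x) ^ 2) (interior Pyr) := by
      refine ContinuousOn.pow ?_ 2
      exact fun x hx => (hdiff x hx).continuousAt.continuousWithinAt
    refine ⟨hcont.aestronglyMeasurable isOpen_interior.measurableSet, ?_⟩
    refine HasFiniteIntegral.restrict_of_bounded (C := 1) pyr_volume_lt_top ?_
    rw [ae_restrict_iff' isOpen_interior.measurableSet]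
    refine Filter.Eventually.of_forall fun x hx => ?_
    have h1 := vFun_abs_le_one k a b c (le_trans hc (Nat.sub_le k 1)) hx
    rw [Real.norm_eq_abs, abs_pow]
    calc |vFun k a b c x| ^ 2 ≤ 1 ^ 2 := by
          exact pow_le_pow_left₀ (abs_nonneg _) h1 2
      _ = 1 := one_pow 2
  · have hmeas : AEStronglyMeasurable (fun x => ‖fderiv ℝ (vFun k a b c) x‖ ^ 2)
        (volume.restrict (interior Pyr)) := by
      exact ((measurable_fderiv ℝ (vFun k a b c)).norm.pow_const 2).aestronglyMeasurable
    refine ⟨hmeas, ?_⟩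
    refine HasFiniteIntegral.restrict_of_bounded (C := (5 * k : ℝ) ^ 2) pyr_volume_lt_top ?_
    rw [ae_restrict_iff' isOpen_interior.measurableSet]
    refine Filter.Eventually.of_forall fun x hx => ?_
    have h1 := fderiv_bound k a b c hk ha hb hc hx
    rw [Real.norm_eq_abs, abs_of_nonneg (by positivity)]
    exact pow_le_pow_left₀ (norm_nonneg _) h1 2

end
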